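/- Let p > 2 and let f : [0,1] → [0,1] be a homeomorphism (increasing, continuous, bijective) with f(0) = 0. If f satisfies the p-Douglas condition on [0,1], i.e. ∫₀¹∫₀¹ |f(x)-f(y)|^p / |x-y|^p dx dy < ∞, then ∫₀¹ |f(x)|^p / x^{p-1} dx < ∞. -/

import Mathlib

open MeasureTheory Set Filter ENNReal Topology

set_option maxHeartbeats 4000000 in
/-- If `p > 2` and `f` is an increasing homeomorphism of `[0,1]` onto itself
with `f 0 = 0` satisfying the `p`-Douglas condition, then `∫₀¹ |f x|^p / x^(p-1) dx < ∞`. -/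
theorem douglas_implies_weighted_integrable
    (p : ℝ) (hp : 2 < p) (f : ℝ → ℝ)
    (hmono : StrictMonoOn f (Icc 0 1))
    (hcont : ContinuousOn f (Icc 0 1))
    (hrange : f '' Icc 0 1 = Icc 0 1)
    (hf0 : f 0 = 0)
    (hDouglas : ∫⁻ x in Icc (0:ℝ) 1, ∫⁻ y in Icc (0:ℝ) 1,
        ENNReal.ofReal (|f x - f y| ^ p / |x - y| ^ p) < ⊤) :
    ∫⁻ x in Icc (0:ℝ) 1, ENNReal.ofReal (|f x| ^ p / x ^ (p - 1)) < ⊤ := by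
  have hp0 : (0:ℝ) < p := by linarith
  -- dyadic scales
  set t : ℕ → ℝ := fun k => (2:ℝ)⁻¹ ^ k with ht_def
  have ht_pos : ∀ k, 0 < t k := fun k => pow_pos (by norm_num) k
  have ht_le_one : ∀ k, t k ≤ 1 := fun k => pow_le_one₀ (by norm_num) (by norm_num)
  have ht_anti : ∀ {k l : ℕ}, k ≤ l → t l ≤ t k :=
    fun h => pow_le_pow_of_le_one (by norm_num) (by norm_num) h
  have ht_mem : ∀ k, t k ∈ Icc (0:ℝ) 1 := fun k => ⟨(ht_pos k).le, ht_le_one k⟩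
  have ht_succ : ∀ k, t (k+1) = t k / 2 := by
    intro k; simp only [ht_def, pow_succ]; ring
  have ht0 : t 0 = 1 := by simp [ht_def]
  -- basic facts about f
  have hmem : ∀ x ∈ Icc (0:ℝ) 1, f x ∈ Icc (0:ℝ) 1 := by
    intro x hx; rw [← hrange]; exact mem_image_of_mem f hx
  have hmo : MonotoneOn f (Icc 0 1) := hmono.monotoneOn
  have hf1 : f 1 = 1 := by
    have h1 : (1:ℝ) ∈ f '' Icc 0 1 := by
      rw [hrange]; exact ⟨zero_le_one, le_refl 1⟩
    obtain ⟨x, hx, hfx⟩ := h1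
    have h2 : f x ≤ f 1 := hmo hx (right_mem_Icc.mpr zero_le_one) hx.2
    have h3 := (hmem 1 (right_mem_Icc.mpr zero_le_one)).2
    linarith [hfx ▸ h2]
  -- ENNReal powers of 2
  set w : ℝ → ℝ≥0∞ := fun r => (2:ℝ≥0∞) ^ r with hw_def
  have hw_add : ∀ a b : ℝ, w (a+b) = w a * w b :=
    fun a b => ENNReal.rpow_add a b (by norm_num) (by norm_num)
  have hw_ne_top : ∀ a, w a ≠ ⊤ := by
    intro a; simp [hw_def, ENNReal.rpow_eq_top_iff]
  have hw_ne_zero : ∀ a, w a ≠ 0 := by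
    intro a; simp [hw_def, ENNReal.rpow_eq_zero_iff]
  have hw_lt_one : ∀ a : ℝ, 0 < a → w (-a) < 1 := by
    intro a ha
    exact ENNReal.rpow_lt_one_of_one_lt_of_neg (by norm_num) (by linarith)
  have hw_geom : ∀ a : ℝ, 0 < a → ∑' j : ℕ, w (-(j:ℝ)*a) < ⊤ := by
    intro a ha
    have h1 : ∀ j : ℕ, w (-(j:ℝ)*a) = (w (-a))^j := by
      intro j
      show (2:ℝ≥0∞) ^ (-(j:ℝ)*a) = ((2:ℝ≥0∞) ^ (-a))^j
      rw [show (-(j:ℝ)*a) = (-a) * (j:ℝ) by ring, ENNReal.rpow_mul,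
        ENNReal.rpow_natCast]
    simp only [h1]
    rw [ENNReal.tsum_geometric]
    exact ENNReal.inv_lt_top.mpr (tsub_pos_iff_lt.mpr (hw_lt_one a ha))
  have hofReal_t : ∀ k : ℕ, ENNReal.ofReal (t k) = w (-(k:ℝ)) := by
    intro k
    show ENNReal.ofReal ((2:ℝ)⁻¹ ^ k) = (2:ℝ≥0∞) ^ (-(k:ℝ))
    rw [ENNReal.ofReal_pow (by norm_num), ENNReal.ofReal_inv_of_pos (by norm_num),
      ENNReal.ofReal_ofNat, ENNReal.rpow_neg, ENNReal.rpow_natCast, ENNReal.inv_pow]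
  have hofReal_t_rpow : ∀ (k : ℕ) (q : ℝ), ENNReal.ofReal (t k ^ q) = w (-(k:ℝ)*q) := by
    intro k q
    rw [← ENNReal.ofReal_rpow_of_pos (ht_pos k), hofReal_t, hw_def,
      ← ENNReal.rpow_mul]
  -- the kernel and objects
  set K : ℝ → ℝ → ℝ≥0∞ := fun x y => ENNReal.ofReal (|f x - f y| ^ p / |x - y| ^ p)
    with hK_def
  set DI : ℝ≥0∞ := ∫⁻ x in Icc (0:ℝ) 1, ∫⁻ y in Icc (0:ℝ) 1, K x y with hDI_def
  set d : ℕ → ℝ := fun k => f (t (k+1)) - f (t (k+2)) with hd_def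
  have hd_nonneg : ∀ k, 0 ≤ d k := by
    intro k
    have := hmo (ht_mem (k+2)) (ht_mem (k+1)) (ht_anti (by omega))
    simp only [hd_def]; linarith
  set DL : ℕ → ℝ≥0∞ :=
    fun k => ∫⁻ x in Icc (t (k+1)) (t (k+1) + t (k+2)), ∫⁻ y in Icc 0 (t (k+2)), K x y
    with hDL_def
  -- Claim A : local Douglas bound
  have hw_inv : ∀ a : ℝ, (w a)⁻¹ = w (-a) := by
    intro a
    show ((2:ℝ≥0∞)^a)⁻¹ = (2:ℝ≥0∞)^(-a)
    exact (ENNReal.rpow_neg 2 a).symm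
  have hw_div : ∀ (A : ℝ≥0∞) (a : ℝ), A / w a = A * w (-a) := by
    intro A a
    rw [div_eq_mul_inv, hw_inv]
  have hX_sub : ∀ k : ℕ, Icc (t (k+1)) (t (k+1) + t (k+2)) ⊆ Icc (0:ℝ) 1 := by
    intro k
    apply Icc_subset_Icc (ht_pos (k+1)).le
    have e1 := ht_succ k; have e2 := ht_succ (k+1)
    have := ht_le_one k; have := ht_pos k
    linarith
  have claimA : ∀ k : ℕ, ENNReal.ofReal (d k ^ p)
      ≤ w (2*(k:ℝ) + 4 - (k:ℝ)*p) * DL k := by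
    intro k
    -- pointwise kernel bound on the box
    have hker : ∀ x ∈ Icc (t (k+1)) (t (k+1) + t (k+2)), ∀ y ∈ Icc (0:ℝ) (t (k+2)),
        ENNReal.ofReal (d k ^ p / t k ^ p) ≤ K x y := by
      intro x hx y hy
      have hyIcc : y ∈ Icc (0:ℝ) 1 := ⟨hy.1, le_trans hy.2 (ht_le_one (k+2))⟩
      have hxIcc : x ∈ Icc (0:ℝ) 1 := hX_sub k hx
      have hfx : f (t (k+1)) ≤ f x := hmo (ht_mem (k+1)) hxIcc hx.1
      have hfy : f y ≤ f (t (k+2)) := hmo hyIcc (ht_mem (k+2)) hy.2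
      have hd_le : d k ≤ f x - f y := by simp only [hd_def]; linarith
      have habs1 : d k ≤ |f x - f y| := le_trans hd_le (le_abs_self _)
      have hxy_pos : 0 < x - y := by
        have h2 : t (k+2) < t (k+1) := by
          have := ht_succ (k+1); have := ht_pos (k+1); linarith
        have := hx.1; have := hy.2; linarith
      have habs_pos : 0 < |x - y| := by rw [abs_of_pos hxy_pos]; exact hxy_pos
      have habs2 : |x - y| ≤ t k := by
        rw [abs_of_pos hxy_pos]
        have h1 : t (k+1) + t (k+2) ≤ t k := by
          have := ht_succ k; have := ht_succ (k+1); have := ht_pos k; linarith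
        have := hx.2; have := hy.1; linarith
      have hdiv : d k ^ p / t k ^ p ≤ |f x - f y| ^ p / |x - y| ^ p :=
        div_le_div₀ (Real.rpow_nonneg (abs_nonneg _) p)
          (Real.rpow_le_rpow (hd_nonneg k) habs1 hp0.le)
          (Real.rpow_pos_of_pos habs_pos p)
          (Real.rpow_le_rpow (abs_nonneg _) habs2 hp0.le)
      exact ENNReal.ofReal_le_ofReal hdiv
    -- inner integral lower bound
    have hinner : ∀ x ∈ Icc (t (k+1)) (t (k+1) + t (k+2)),
        ENNReal.ofReal (d k ^ p / t k ^ p) * ENNReal.ofReal (t (k+2))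
          ≤ ∫⁻ y in Icc (0:ℝ) (t (k+2)), K x y := by
      intro x hx
      have h1 : ENNReal.ofReal (d k ^ p / t k ^ p) * ENNReal.ofReal (t (k+2))
          = ∫⁻ _y in Icc (0:ℝ) (t (k+2)), ENNReal.ofReal (d k ^ p / t k ^ p) := by
        rw [setLIntegral_const, Real.volume_Icc, sub_zero]
      rw [h1]
      apply lintegral_mono_ae
      filter_upwards [ae_restrict_mem measurableSet_Icc] with y hy
      exact hker x hx y hy
    -- outer integral lower bound
    have houter : ENNReal.ofReal (d k ^ p / t k ^ p)
        * (ENNReal.ofReal (t (k+2)) * ENNReal.ofReal (t (k+2))) ≤ DL k := by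
      rw [hDL_def]
      calc ENNReal.ofReal (d k ^ p / t k ^ p)
            * (ENNReal.ofReal (t (k+2)) * ENNReal.ofReal (t (k+2)))
          = ∫⁻ _x in Icc (t (k+1)) (t (k+1) + t (k+2)),
              (ENNReal.ofReal (d k ^ p / t k ^ p) * ENNReal.ofReal (t (k+2))) := by
            rw [setLIntegral_const, Real.volume_Icc, add_sub_cancel_left]
            ring
        _ ≤ ∫⁻ x in Icc (t (k+1)) (t (k+1) + t (k+2)), ∫⁻ y in Icc 0 (t (k+2)), K x y := by
            apply lintegral_mono_ae
            filter_upwards [ae_restrict_mem measurableSet_Icc] with x hx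
            exact hinner x hx
    -- rearrange
    have hsplit : ENNReal.ofReal (d k ^ p)
        = ENNReal.ofReal (d k ^ p / t k ^ p) * ENNReal.ofReal (t k ^ p) := by
      rw [← ENNReal.ofReal_mul
        (div_nonneg (Real.rpow_nonneg (hd_nonneg k) p) (Real.rpow_nonneg (ht_pos k).le p))]
      congr 1
      rw [div_mul_cancel₀]
      exact (Real.rpow_pos_of_pos (ht_pos k) p).ne'
    have hb : ENNReal.ofReal (t (k+2)) = w (-((k:ℝ)+2)) := by
      rw [hofReal_t (k+2)]
      congr 1
      push_cast
      ring
    have hbb : ENNReal.ofReal (t (k+2)) * ENNReal.ofReal (t (k+2))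
        = w (-((k:ℝ)+2) + -((k:ℝ)+2)) := by
      rw [hb, hw_add]
    have hle : ENNReal.ofReal (d k ^ p / t k ^ p)
        ≤ DL k / w (-((k:ℝ)+2) + -((k:ℝ)+2)) := by
      rw [ENNReal.le_div_iff_mul_le (Or.inl (hw_ne_zero _)) (Or.inl (hw_ne_top _))]
      rw [← hbb]
      exact houter
    calc ENNReal.ofReal (d k ^ p)
        = ENNReal.ofReal (d k ^ p / t k ^ p) * ENNReal.ofReal (t k ^ p) := hsplit
      _ ≤ (DL k / w (-((k:ℝ)+2) + -((k:ℝ)+2))) * ENNReal.ofReal (t k ^ p) :=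
          mul_le_mul_left hle _
      _ = w (2*(k:ℝ) + 4 - (k:ℝ)*p) * DL k := by
          rw [hw_div, hofReal_t_rpow k p, mul_assoc, ← hw_add]
          rw [mul_comm]
          congr 2
          ring
  -- Claim B : disjointness, sum of local energies bounded by Douglas energy
  have claimB : ∑' k, DL k ≤ DI := by
    have hdisj : Pairwise (Function.onFun Disjoint fun k : ℕ => Icc (t (k+1)) (t (k+1) + t (k+2))) := by
      have key : ∀ k l : ℕ, k < l →
          Disjoint (Icc (t (k+1)) (t (k+1) + t (k+2))) (Icc (t (l+1)) (t (l+1) + t (l+2))) := by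
        intro k l hkl
        apply Set.disjoint_left.mpr
        intro x hxk hxl
        have h1 : t (l+1) ≤ t (k+2) := ht_anti (by omega)
        have h2 : t (l+2) ≤ t (k+3) := ht_anti (by omega)
        have e1 := ht_succ (k+1)
        have e2 := ht_succ (k+2)
        have h3 := ht_pos (k+1)
        have h4 := hxk.1
        have h5 := hxl.2
        linarith
      intro k l hkl
      rcases hkl.lt_or_gt with h | h
      · exact key k l h
      · exact (key l k h).symm
    calc ∑' k, DL k
        ≤ ∑' k : ℕ, ∫⁻ x in Icc (t (k+1)) (t (k+1) + t (k+2)),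
            ∫⁻ y in Icc (0:ℝ) 1, K x y := by
          apply ENNReal.tsum_le_tsum
          intro k
          rw [hDL_def]
          apply lintegral_mono
          intro x
          exact lintegral_mono_set (Icc_subset_Icc le_rfl (ht_le_one (k+2)))
      _ = ∫⁻ x in ⋃ k : ℕ, Icc (t (k+1)) (t (k+1) + t (k+2)),
            ∫⁻ y in Icc (0:ℝ) 1, K x y :=
          (lintegral_iUnion (fun k => measurableSet_Icc) hdisj _).symm
      _ ≤ DI := by
          rw [hDI_def]
          exact lintegral_mono_set (iUnion_subset hX_sub)
  -- Claim C : telescoping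
  have claimC : ∀ n : ℕ, ENNReal.ofReal (f (t (n+1))) ≤ ∑' j : ℕ, ENNReal.ofReal (d (n+j)) := by
    intro n
    have hmono_t : ∀ a b : ℕ, a ≤ b → f (t b) ≤ f (t a) :=
      fun a b h => hmo (ht_mem b) (ht_mem a) (ht_anti h)
    have hpartial : ∀ m : ℕ, ∑ j ∈ Finset.range m, ENNReal.ofReal (d (n+j))
        = ENNReal.ofReal (f (t (n+1)) - f (t (n+m+1))) := by
      intro m
      induction m with
      | zero => simp
      | succ m ih =>
        have h1 : 0 ≤ f (t (n+1)) - f (t (n+m+1)) :=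
          sub_nonneg.mpr (hmono_t (n+1) (n+m+1) (by omega))
        have e1 : n + (m+1) + 1 = n + m + 2 := by omega
        rw [e1, Finset.sum_range_succ, ih, ← ENNReal.ofReal_add h1 (hd_nonneg (n+m))]
        congr 1
        simp only [hd_def]
        ring
    have htt : Tendsto (fun m : ℕ => t (n+m+1)) atTop (𝓝 0) := by
      have heq : (fun m : ℕ => t (n+m+1)) = fun m : ℕ => (2⁻¹:ℝ)^(n+1) * (2⁻¹)^m := by
        funext m
        simp only [ht_def]
        rw [← pow_add]
        congr 1
        omega
      rw [heq]
      simpa using (tendsto_pow_atTop_nhds_zero_of_lt_one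
        (by norm_num : (0:ℝ) ≤ 2⁻¹) (by norm_num)).const_mul ((2⁻¹:ℝ)^(n+1))
    have hft : Tendsto (fun m : ℕ => f (t (n+m+1))) atTop (𝓝 0) := by
      have hcw : ContinuousWithinAt f (Icc 0 1) 0 := hcont 0 ⟨le_refl 0, zero_le_one⟩
      have h2 := hcw.tendsto.comp
        (tendsto_nhdsWithin_iff.mpr ⟨htt, Eventually.of_forall (fun m => ht_mem _)⟩)
      rwa [hf0] at h2
    have hlim : Tendsto (fun m : ℕ => ENNReal.ofReal (f (t (n+1)) - f (t (n+m+1)))) atTop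
        (𝓝 (ENNReal.ofReal (f (t (n+1))))) := by
      have h3 : Tendsto (fun m : ℕ => f (t (n+1)) - f (t (n+m+1))) atTop
          (𝓝 (f (t (n+1)) - 0)) := tendsto_const_nhds.sub hft
      rw [sub_zero] at h3
      exact ENNReal.tendsto_ofReal h3
    refine le_of_tendsto' hlim (fun m => ?_)
    rw [← hpartial m]
    exact ENNReal.sum_le_tsum _
  -- weight constant
  set c : ℝ := (p-2)/(2*p) with hc_def
  have hc_pos : 0 < c := by
    rw [hc_def]; exact div_pos (by linarith) (by linarith)
  have hcp : c * p = (p-2)/2 := by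
    rw [hc_def]; field_simp
  set G : ℝ≥0∞ := ∑' j : ℕ, w (-(j:ℝ)*c) with hG_def
  have hG_lt_top : G < ⊤ := hw_geom c hc_pos
  -- Claim D : Hölder-free weighted bound
  have claimD : ∀ m : ℕ, (ENNReal.ofReal (f (t (m+1))))^p
      ≤ G^p * ∑' j : ℕ, w ((j:ℝ)*(c*p)) * (ENNReal.ofReal (d (m+j)))^p := by
    intro m
    set Q : ℝ≥0∞ := ∑' j : ℕ, w ((j:ℝ)*(c*p)) * (ENNReal.ofReal (d (m+j)))^p with hQ_def
    have hterm : ∀ j : ℕ, ENNReal.ofReal (d (m+j)) ≤ w (-(j:ℝ)*c) * Q^p⁻¹ := by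
      intro j
      have h0 : w ((j:ℝ)*c) * w (-(j:ℝ)*c) = 1 := by
        rw [← hw_add]
        have e : (j:ℝ)*c + -(j:ℝ)*c = 0 := by ring
        rw [e]
        show (2:ℝ≥0∞)^(0:ℝ) = 1
        exact ENNReal.rpow_zero
      have h1 : (ENNReal.ofReal (d (m+j)) * w ((j:ℝ)*c))^p ≤ Q := by
        have heq : (ENNReal.ofReal (d (m+j)) * w ((j:ℝ)*c))^p
            = w ((j:ℝ)*(c*p)) * (ENNReal.ofReal (d (m+j)))^p := by
          rw [ENNReal.mul_rpow_of_nonneg _ _ hp0.le]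
          have hwp : (w ((j:ℝ)*c))^p = w ((j:ℝ)*(c*p)) := by
            show ((2:ℝ≥0∞) ^ ((j:ℝ)*c))^p = (2:ℝ≥0∞) ^ ((j:ℝ)*(c*p))
            rw [← ENNReal.rpow_mul, mul_assoc]
          rw [hwp]
          ring
        rw [heq, hQ_def]
        exact ENNReal.le_tsum j
      have h2 : ENNReal.ofReal (d (m+j)) * w ((j:ℝ)*c) ≤ Q^p⁻¹ := by
        calc ENNReal.ofReal (d (m+j)) * w ((j:ℝ)*c)
            = ((ENNReal.ofReal (d (m+j)) * w ((j:ℝ)*c))^p)^p⁻¹ :=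
              (ENNReal.rpow_rpow_inv hp0.ne' _).symm
          _ ≤ Q^p⁻¹ := ENNReal.rpow_le_rpow h1 (by positivity)
      calc ENNReal.ofReal (d (m+j))
          = w (-(j:ℝ)*c) * (ENNReal.ofReal (d (m+j)) * w ((j:ℝ)*c)) := by
            have heq2 : w (-(j:ℝ)*c) * (ENNReal.ofReal (d (m+j)) * w ((j:ℝ)*c))
                = ENNReal.ofReal (d (m+j)) * (w ((j:ℝ)*c) * w (-(j:ℝ)*c)) := by ring
            rw [heq2, h0, mul_one]
        _ ≤ w (-(j:ℝ)*c) * Q^p⁻¹ := mul_le_mul_right h2 _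
    calc (ENNReal.ofReal (f (t (m+1))))^p
        ≤ (∑' j : ℕ, ENNReal.ofReal (d (m+j)))^p :=
          ENNReal.rpow_le_rpow (claimC m) hp0.le
      _ ≤ (∑' j : ℕ, w (-(j:ℝ)*c) * Q^p⁻¹)^p :=
          ENNReal.rpow_le_rpow (ENNReal.tsum_le_tsum hterm) hp0.le
      _ = (G * Q^p⁻¹)^p := by rw [ENNReal.tsum_mul_right, hG_def]
      _ = G^p * Q := by
          rw [ENNReal.mul_rpow_of_nonneg _ _ hp0.le, ENNReal.rpow_inv_rpow hp0.ne']
  -- Final assembly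
  -- domain decomposition into dyadic intervals
  have hunion : (⋃ n : ℕ, Ioc (t (n+1)) (t n)) = Ioc (0:ℝ) 1 := by
    ext x
    simp only [mem_iUnion, mem_Ioc]
    constructor
    · rintro ⟨n, h1, h2⟩
      exact ⟨(ht_pos (n+1)).trans h1, le_trans h2 (ht_le_one n)⟩
    · rintro ⟨hx0, hx1⟩
      obtain ⟨m, hm⟩ := exists_pow_lt_of_lt_one hx0 (by norm_num : (2:ℝ)⁻¹ < 1)
      have hP : ∃ n : ℕ, t (n+1) < x := by
        cases m with
        | zero =>
          exfalso
          simp only [pow_zero] at hm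
          linarith
        | succ m' => exact ⟨m', hm⟩
      have h1 : t (Nat.find hP + 1) < x := Nat.find_spec hP
      refine ⟨Nat.find hP, h1, ?_⟩
      rcases Nat.eq_zero_or_pos (Nat.find hP) with h0 | hpos
      · rw [h0, ht0]; exact hx1
      · have h3 := Nat.find_min hP (Nat.sub_lt hpos one_pos)
        have e : (Nat.find hP - 1) + 1 = Nat.find hP := by omega
        rw [e] at h3
        exact le_of_not_gt h3
  have hdisjIoc : Pairwise (Function.onFun Disjoint fun n : ℕ => Ioc (t (n+1)) (t n)) := by
    have key : ∀ k l : ℕ, k < l → Disjoint (Ioc (t (k+1)) (t k)) (Ioc (t (l+1)) (t l)) := by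
      intro k l hkl
      apply Set.disjoint_left.mpr
      intro x hxk hxl
      have h1 : t l ≤ t (k+1) := ht_anti (by omega)
      have := hxk.1
      have := hxl.2
      linarith
    intro k l hkl
    rcases hkl.lt_or_gt with h | h
    · exact key k l h
    · exact (key l k h).symm
  have hdecomp : ∫⁻ x in Icc (0:ℝ) 1, ENNReal.ofReal (|f x| ^ p / x ^ (p - 1))
      = ∑' n : ℕ, ∫⁻ x in Ioc (t (n+1)) (t n), ENNReal.ofReal (|f x| ^ p / x ^ (p - 1)) := by
    rw [← setLIntegral_congr (Ioc_ae_eq_Icc (μ := volume) (a := (0:ℝ)) (b := 1)),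
      ← hunion, lintegral_iUnion (fun n => measurableSet_Ioc) hdisjIoc]
  -- bound for each piece
  set A : ℕ → ℝ≥0∞ := fun n => (ENNReal.ofReal (f (t n)))^p * w (((n:ℝ)+1)*(p-2)) with hA_def
  have hpiece : ∀ n : ℕ, ∫⁻ x in Ioc (t (n+1)) (t n), ENNReal.ofReal (|f x| ^ p / x ^ (p-1))
      ≤ A n := by
    intro n
    have hbd : ∀ x ∈ Ioc (t (n+1)) (t n), ENNReal.ofReal (|f x| ^ p / x ^ (p-1))
        ≤ ENNReal.ofReal (f (t n) ^ p / t (n+1) ^ (p-1)) := by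
      intro x hx
      have hx0 : 0 < x := (ht_pos (n+1)).trans hx.1
      have hxIcc : x ∈ Icc (0:ℝ) 1 := ⟨hx0.le, le_trans hx.2 (ht_le_one n)⟩
      have hfx0 : 0 ≤ f x := (hmem x hxIcc).1
      have hfxle : f x ≤ f (t n) := hmo hxIcc (ht_mem n) hx.2
      apply ENNReal.ofReal_le_ofReal
      rw [abs_of_nonneg hfx0]
      exact div_le_div₀ (Real.rpow_nonneg (le_trans hfx0 hfxle) p)
        (Real.rpow_le_rpow hfx0 hfxle hp0.le)
        (Real.rpow_pos_of_pos (ht_pos (n+1)) (p-1))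
        (Real.rpow_le_rpow (ht_pos (n+1)).le hx.1.le (by linarith))
    calc ∫⁻ x in Ioc (t (n+1)) (t n), ENNReal.ofReal (|f x| ^ p / x ^ (p-1))
        ≤ ∫⁻ _x in Ioc (t (n+1)) (t n), ENNReal.ofReal (f (t n) ^ p / t (n+1) ^ (p-1)) := by
          apply lintegral_mono_ae
          filter_upwards [ae_restrict_mem measurableSet_Ioc] with x hx using hbd x hx
      _ = ENNReal.ofReal (f (t n) ^ p / t (n+1) ^ (p-1)) * ENNReal.ofReal (t (n+1)) := by
          rw [setLIntegral_const, Real.volume_Ioc]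
          congr 2
          have := ht_succ n
          linarith
      _ = A n := by
          rw [hA_def]
          rw [ENNReal.ofReal_div_of_pos (Real.rpow_pos_of_pos (ht_pos (n+1)) _)]
          rw [← ENNReal.ofReal_rpow_of_nonneg (hmem (t n) (ht_mem n)).1 hp0.le]
          rw [hofReal_t_rpow (n+1) (p-1), hofReal_t (n+1), hw_div, mul_assoc, ← hw_add]
          congr 2
          push_cast
          ring
  -- combine with the claims
  have hH : ∑' j : ℕ, w (-(j:ℝ)*(c*p)) < ⊤ := hw_geom (c*p) (mul_pos hc_pos hp0)
  have hDL_le : ∀ j : ℕ, ∑' m : ℕ, DL (m + j) ≤ DI :=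
    fun j => le_trans (ENNReal.tsum_comp_le_tsum_of_injective (add_left_injective j) DL) claimB
  have hAm : ∀ m : ℕ, A (m+1) ≤ G^p * ∑' j : ℕ, w (2*p + -(j:ℝ)*(c*p)) * DL (m+j) := by
    intro m
    have hA1 : A (m+1) = (ENNReal.ofReal (f (t (m+1))))^p * w (((m:ℝ)+2)*(p-2)) := by
      simp only [hA_def]
      have e : ((m+1:ℕ):ℝ)+1 = (m:ℝ)+2 := by push_cast; ring
      rw [e]
    have h2 : ∀ j : ℕ, w ((j:ℝ)*(c*p)) * (ENNReal.ofReal (d (m+j)))^p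
        ≤ w ((j:ℝ)*(c*p)) * (w (2*((m:ℝ)+(j:ℝ)) + 4 - ((m:ℝ)+(j:ℝ))*p) * DL (m+j)) := by
      intro j
      apply mul_le_mul_right
      rw [ENNReal.ofReal_rpow_of_nonneg (hd_nonneg (m+j)) hp0.le]
      have h3 := claimA (m+j)
      have e : ((m+j:ℕ):ℝ) = (m:ℝ)+(j:ℝ) := by push_cast; ring
      rw [e] at h3
      exact h3
    calc A (m+1)
        = (ENNReal.ofReal (f (t (m+1))))^p * w (((m:ℝ)+2)*(p-2)) := hA1
      _ ≤ (G^p * ∑' j : ℕ, w ((j:ℝ)*(c*p)) * (ENNReal.ofReal (d (m+j)))^p)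
            * w (((m:ℝ)+2)*(p-2)) := mul_le_mul_left (claimD m) _
      _ ≤ (G^p * ∑' j : ℕ, w ((j:ℝ)*(c*p))
            * (w (2*((m:ℝ)+(j:ℝ)) + 4 - ((m:ℝ)+(j:ℝ))*p) * DL (m+j)))
            * w (((m:ℝ)+2)*(p-2)) :=
          mul_le_mul_left (mul_le_mul_right (ENNReal.tsum_le_tsum h2) _) _
      _ = G^p * ∑' j : ℕ, w (2*p + -(j:ℝ)*(c*p)) * DL (m+j) := by
          rw [mul_assoc]
          congr 1
          rw [← ENNReal.tsum_mul_right]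
          congr 1
          funext j
          have heq : w ((j:ℝ)*(c*p))
                * (w (2*((m:ℝ)+(j:ℝ)) + 4 - ((m:ℝ)+(j:ℝ))*p) * DL (m+j))
                * w (((m:ℝ)+2)*(p-2))
              = (w ((j:ℝ)*(c*p)) * w (2*((m:ℝ)+(j:ℝ)) + 4 - ((m:ℝ)+(j:ℝ))*p)
                * w (((m:ℝ)+2)*(p-2))) * DL (m+j) := by ring
          rw [heq, ← hw_add, ← hw_add]
          congr 1
          congr 1
          rw [hcp]
          ring
  have hsum2 : ∑' m : ℕ, A (m+1)
      ≤ G^p * (w (2*p) * ((∑' j : ℕ, w (-(j:ℝ)*(c*p))) * DI)) := by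
    calc ∑' m : ℕ, A (m+1)
        ≤ ∑' m : ℕ, G^p * ∑' j : ℕ, w (2*p + -(j:ℝ)*(c*p)) * DL (m+j) :=
          ENNReal.tsum_le_tsum hAm
      _ = G^p * ∑' m : ℕ, ∑' j : ℕ, w (2*p + -(j:ℝ)*(c*p)) * DL (m+j) :=
          ENNReal.tsum_mul_left
      _ = G^p * ∑' j : ℕ, ∑' m : ℕ, w (2*p + -(j:ℝ)*(c*p)) * DL (m+j) := by
          rw [ENNReal.tsum_comm]
      _ = G^p * ∑' j : ℕ, w (2*p + -(j:ℝ)*(c*p)) * ∑' m : ℕ, DL (m+j) := by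
          congr 1
          exact tsum_congr (fun j => ENNReal.tsum_mul_left)
      _ ≤ G^p * ∑' j : ℕ, w (2*p + -(j:ℝ)*(c*p)) * DI := by
          apply mul_le_mul_right
          apply ENNReal.tsum_le_tsum
          intro j
          exact mul_le_mul_right (hDL_le j) _
      _ = G^p * (w (2*p) * ((∑' j : ℕ, w (-(j:ℝ)*(c*p))) * DI)) := by
          congr 1
          calc ∑' j : ℕ, w (2*p + -(j:ℝ)*(c*p)) * DI
              = ∑' j : ℕ, w (2*p) * (w (-(j:ℝ)*(c*p)) * DI) := by
                refine tsum_congr (fun j => ?_)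
                rw [hw_add]
                ring
            _ = w (2*p) * ((∑' j : ℕ, w (-(j:ℝ)*(c*p))) * DI) := by
                rw [ENNReal.tsum_mul_left]
                congr 1
                exact ENNReal.tsum_mul_right
  have hA_lt_top : ∀ n, A n < ⊤ := by
    intro n
    rw [hA_def]
    exact ENNReal.mul_lt_top
      (ENNReal.rpow_lt_top_of_nonneg hp0.le ENNReal.ofReal_ne_top)
      (lt_top_iff_ne_top.mpr (hw_ne_top _))
  calc ∫⁻ x in Icc (0:ℝ) 1, ENNReal.ofReal (|f x| ^ p / x ^ (p - 1))
      = ∑' n : ℕ, ∫⁻ x in Ioc (t (n+1)) (t n), ENNReal.ofReal (|f x| ^ p / x ^ (p - 1)) :=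
        hdecomp
    _ ≤ ∑' n : ℕ, A n := ENNReal.tsum_le_tsum hpiece
    _ = A 0 + ∑' m : ℕ, A (m+1) := tsum_eq_zero_add' ENNReal.summable
    _ ≤ A 0 + G^p * (w (2*p) * ((∑' j : ℕ, w (-(j:ℝ)*(c*p))) * DI)) :=
        add_le_add_right hsum2 _
    _ < ⊤ := by
        apply ENNReal.add_lt_top.mpr
        refine ⟨hA_lt_top 0, ?_⟩
        exact ENNReal.mul_lt_top
          (ENNReal.rpow_lt_top_of_nonneg hp0.le hG_lt_top.ne)
          (ENNReal.mul_lt_top (lt_top_iff_ne_top.mpr (hw_ne_top _))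
            (ENNReal.mul_lt_top hH hDouglas))
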